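/- (Uniform boundedness of per-cell error sums under WACI.) Let n ≥ 1, γ > 0, λ ∈ (0,1), α* ∈ (0,1). Let idx : ℕ → {1, …, n}, let (err_t)_{t≥1} be a sequence with err_t ∈ {0,1} for every t, and let (α_t)_{t≥1} be a sequence of vectors in ℝ^n satisfying α_{t+1}[j] = α_t[j] + γ·λ^{|idx(t) − j|}·(α* − err_t) for every t ≥ 1 and j ∈ {1, …, n}. Assume there exists ν ∈ ℕ such that α_t[j] ∈ [−ν, 1+ν] for every t ≥ 1 and every j ∈ {1, …, n}. Then there exists a constant C ≥ 0 such that for every T ≥ 1 and every i ∈ {1, …, n}, | Σ_{t ≤ T, idx(t) = i} (α* − err_t) | ≤ C. -/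

import Mathlib

/-- Uniform boundedness of per-cell error sums under WACI. -/
theorem stmt_12 (n : ℕ) (hn : 1 ≤ n) (γ lam αstar : ℝ) (hγ : 0 < γ)
    (hlam : lam ∈ Set.Ioo (0 : ℝ) 1) (hαstar : αstar ∈ Set.Ioo (0 : ℝ) 1)
    (idx : ℕ → Fin n) (err : ℕ → ℝ)
    (herr : ∀ t, 1 ≤ t → err t = 0 ∨ err t = 1)
    (α : ℕ → Fin n → ℝ)
    (hrec : ∀ t, 1 ≤ t → ∀ j : Fin n,
      α (t + 1) j = α t j + γ * lam ^ ((idx t : ℤ) - (j : ℤ)).natAbs * (αstar - err t))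
    (ν : ℕ) (hbound : ∀ t, 1 ≤ t → ∀ j : Fin n, α t j ∈ Set.Icc (-(ν : ℝ)) (1 + ν)) :
    ∃ C : ℝ, 0 ≤ C ∧ ∀ T, 1 ≤ T → ∀ i : Fin n,
      |∑ t ∈ (Finset.Icc 1 T).filter (fun t => idx t = i), (αstar - err t)| ≤ C := by
  obtain ⟨hl0, hl1⟩ := hlam
  set B : ℝ := (1 + 2 * ν) / γ with hBdef
  have hB0 : 0 ≤ B := by positivity
  have h1l2 : 0 < 1 - lam ^ 2 := by nlinarith
  refine ⟨4 * B / (1 - lam ^ 2), by positivity, ?_⟩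
  intro T hT i
  -- per-cell sums, as a function on ℕ
  set S : ℕ → ℝ := fun k =>
    if h : k < n then
      ∑ t ∈ (Finset.Icc 1 T).filter (fun t => idx t = ⟨k, h⟩), (αstar - err t)
    else 0 with hSdef
  have hgoal : (∑ t ∈ (Finset.Icc 1 T).filter (fun t => idx t = i), (αstar - err t))
      = S (i : ℕ) := by
    simp only [hSdef, i.isLt, dif_pos, Fin.eta]
  rw [hgoal]
  -- weighted sums
  set W : ℕ → ℝ := fun j =>
    ∑ k ∈ Finset.range n, lam ^ (((k : ℤ) - (j : ℤ)).natAbs) * S k with hWdef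
  have hWeq : ∀ j : ℕ, W j = ∑ k ∈ Finset.range n,
      lam ^ (((k : ℤ) - (j : ℤ)).natAbs) * S k := fun _ => rfl
  -- telescoping
  have htel : ∀ U, 1 ≤ U → ∀ j : Fin n, α (U + 1) j = α 1 j +
      γ * ∑ t ∈ Finset.Icc 1 U, lam ^ ((idx t : ℤ) - (j : ℤ)).natAbs * (αstar - err t) := by
    intro U hU
    induction U, hU using Nat.le_induction with
    | base =>
      intro j
      rw [hrec 1 le_rfl j]
      simp [Finset.Icc_self]
      ring
    | succ U hU ih =>
      intro j
      rw [hrec (U + 1) (by omega) j, ih j,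
        Finset.sum_Icc_succ_top (by omega : 1 ≤ U + 1)]
      ring
  -- fiberwise decomposition
  have hfib : ∀ j : Fin n,
      (∑ t ∈ Finset.Icc 1 T, lam ^ ((idx t : ℤ) - (j : ℤ)).natAbs * (αstar - err t))
        = W (j : ℕ) := by
    intro j
    rw [hWeq]
    rw [← Finset.sum_fiberwise (Finset.Icc 1 T) idx
      (fun t => lam ^ ((idx t : ℤ) - (j : ℤ)).natAbs * (αstar - err t))]
    rw [← Fin.sum_univ_eq_sum_range
      (fun k => lam ^ (((k : ℤ) - (j : ℤ)).natAbs) * S k) n]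
    refine Finset.sum_congr rfl fun k _ => ?_
    have hSk : S (k : ℕ) = ∑ t ∈ (Finset.Icc 1 T).filter (fun t => idx t = k),
        (αstar - err t) := by
      simp only [hSdef, k.isLt, dif_pos, Fin.eta]
    rw [hSk, Finset.mul_sum]
    refine Finset.sum_congr rfl fun t ht => ?_
    rw [Finset.mem_filter] at ht
    rw [ht.2]
  -- boundedness of W
  have hWb : ∀ j, j < n → |W j| ≤ B := by
    intro j hj
    have h1 := hbound (T + 1) (by omega) ⟨j, hj⟩
    have h2 := hbound 1 le_rfl ⟨j, hj⟩
    simp only [Set.mem_Icc] at h1 h2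
    have heq : γ * W j = α (T + 1) ⟨j, hj⟩ - α 1 ⟨j, hj⟩ := by
      have := htel T hT ⟨j, hj⟩
      rw [hfib ⟨j, hj⟩] at this
      simp only at this
      linarith
    have habs : |γ * W j| ≤ 1 + 2 * ν := by
      rw [heq, abs_le]
      constructor <;> linarith
    have hW2 : |W j| = |γ * W j| / γ := by
      rw [abs_mul, abs_of_pos hγ]
      field_simp
    rw [hW2, hBdef]
    gcongr
  -- partial weighted sums
  set z : ℕ → ℝ := fun j => ∑ k ∈ Finset.range (j + 1), lam ^ (j - k) * S k with hzdef
  have hzrec : ∀ j, z (j + 1) = lam * z j + S (j + 1) := by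
    intro j
    rw [hzdef]
    simp only
    rw [Finset.sum_range_succ, Nat.sub_self, pow_zero, one_mul, Finset.mul_sum]
    congr 1
    refine Finset.sum_congr rfl fun k hk => ?_
    rw [Finset.mem_range] at hk
    have : j + 1 - k = (j - k) + 1 := by omega
    rw [this, pow_succ]
    ring
  -- main identity, interior
  have hA : ∀ j, j + 1 < n → W j - lam * W (j + 1) = (1 - lam ^ 2) * z j := by
    intro j hj
    have hRHS : (1 - lam ^ 2) * z j
        = ∑ k ∈ Finset.range (j + 1), (1 - lam ^ 2) * (lam ^ (j - k) * S k) := by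
      rw [hzdef, Finset.mul_sum]
    have hsplit : Finset.range n = Finset.range (j + 1) ∪ Finset.Ico (j + 1) n := by
      rw [Finset.range_eq_Ico, Finset.range_eq_Ico, Finset.Ico_union_Ico_eq_Ico (by omega) (by omega)]
    rw [hWeq, hWeq, Finset.mul_sum, ← Finset.sum_sub_distrib, hRHS, hsplit,
      Finset.sum_union (by
        rw [Finset.range_eq_Ico]
        exact Finset.Ico_disjoint_Ico_consecutive 0 (j + 1) n)]
    have hzero : ∑ k ∈ Finset.Ico (j + 1) n,
        (lam ^ (((k : ℤ) - (j : ℤ)).natAbs) * S k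
          - lam * (lam ^ (((k : ℤ) - ((j : ℕ) + 1 : ℤ)).natAbs) * S k)) = 0 := by
      refine Finset.sum_eq_zero fun k hk => ?_
      rw [Finset.mem_Ico] at hk
      have e1 : ((k : ℤ) - (j : ℤ)).natAbs = (k - j - 1) + 1 := by omega
      have e2 : ((k : ℤ) - ((j : ℕ) + 1 : ℤ)).natAbs = k - j - 1 := by omega
      rw [e1, e2, pow_succ]
      ring
    have hmain : ∑ k ∈ Finset.range (j + 1),
        (lam ^ (((k : ℤ) - (j : ℤ)).natAbs) * S k
          - lam * (lam ^ (((k : ℤ) - ((j : ℕ) + 1 : ℤ)).natAbs) * S k))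
        = ∑ k ∈ Finset.range (j + 1), (1 - lam ^ 2) * (lam ^ (j - k) * S k) := by
      refine Finset.sum_congr rfl fun k hk => ?_
      rw [Finset.mem_range] at hk
      have e1 : ((k : ℤ) - (j : ℤ)).natAbs = j - k := by omega
      have e2 : ((k : ℤ) - ((j : ℕ) + 1 : ℤ)).natAbs = (j - k) + 1 := by omega
      rw [e1, e2, pow_succ]
      ring
    push_cast
    push_cast at hmain hzero
    rw [hmain, hzero, add_zero]
  -- boundary identity
  have hA' : z (n - 1) = W (n - 1) := by
    rw [hWeq]
    rw [hzdef]
    simp only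
    have : n - 1 + 1 = n := by omega
    rw [this]
    refine Finset.sum_congr rfl fun k hk => ?_
    rw [Finset.mem_range] at hk
    have e1 : ((k : ℤ) - ((n : ℤ) - 1)).natAbs = (n - 1) - k := by omega
    have e2 : ((n : ℕ) - 1 : ℕ) = ((n : ℤ) - 1 : ℤ) := by omega
    congr 1
    rw [← e1]
    congr 1
    omega
  -- boundedness of z
  have hz : ∀ j, j < n → |z j| ≤ 2 * B / (1 - lam ^ 2) := by
    intro j hj
    by_cases hj1 : j + 1 < n
    · have h := hA j hj1
      have hW1 := hWb j hj
      have hW2 := hWb (j + 1) hj1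
      rw [abs_le] at hW1 hW2
      have hzj : z j = (W j - lam * W (j + 1)) / (1 - lam ^ 2) := by
        field_simp
        linarith
      rw [hzj, abs_div, abs_of_pos h1l2]
      gcongr
      rw [abs_le]
      constructor <;> nlinarith
    · have hje : j = n - 1 := by omega
      subst hje
      rw [hA']
      have hW1 := hWb (n - 1) (by omega)
      rw [le_div_iff₀ h1l2]
      have : |W (n - 1)| * (1 - lam ^ 2) ≤ |W (n - 1)| := by nlinarith [abs_nonneg (W (n - 1))]
      linarith
  -- conclude
  have hin := i.isLt
  rcases Nat.eq_zero_or_pos (i : ℕ) with h0 | h0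
  · have hz0 : z 0 = S 0 := by
      rw [hzdef]
      simp
    rw [h0, ← hz0]
    have := hz 0 (by omega)
    have h2 : 2 * B / (1 - lam ^ 2) ≤ 4 * B / (1 - lam ^ 2) := by
      gcongr
      linarith
    linarith
  · obtain ⟨m, hm⟩ : ∃ m, (i : ℕ) = m + 1 := ⟨(i : ℕ) - 1, by omega⟩
    have hS : S (i : ℕ) = z (m + 1) - lam * z m := by
      rw [hm]
      have := hzrec m
      linarith
    have hz1 := hz (m + 1) (by omega)
    have hz2 := hz m (by omega)
    rw [abs_le] at hz1 hz2
    rw [hS, abs_le]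
    have hK0 : (0:ℝ) ≤ 2 * B / (1 - lam ^ 2) := by positivity
    have hm1 : 0 ≤ lam * (z m + 2 * B / (1 - lam ^ 2)) :=
      mul_nonneg hl0.le (by linarith [hz2.1])
    have hm2 : 0 ≤ lam * (2 * B / (1 - lam ^ 2) - z m) :=
      mul_nonneg hl0.le (by linarith [hz2.2])
    have hm3 : 0 ≤ (1 - lam) * (2 * B / (1 - lam ^ 2)) :=
      mul_nonneg (by linarith) hK0
    have h4 : 4 * B / (1 - lam ^ 2) = 2 * (2 * B / (1 - lam ^ 2)) := by ring
    rw [h4]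
    constructor <;> nlinarith [hz1.1, hz1.2]
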